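/- arXiv:1709.06688 — 4 statements merged into one kernel-verified Lean document; each statement's English description precedes it below -/
import Mathlib

section
/- Let G_0 be a graph and G_j, G_k be graphs obtained from G_0 by adding exactly one edge e_j = (u_j, v_j) and e_k = (u_k, v_k) respectively. For the ferromagnetic zero-field Ising measures P_0, P_j, P_k at inverse temperature θ ≥ 0 on {±1}^d, one has E_0[(P_j/P_0)·(P_k/P_0)] = 1 + (E_j[X_{u_k} X_{v_k}] − E_0[X_{u_k} X_{v_k}]) / (E_0[X_{u_k} X_{v_k}] + coth(θ)), and in particular E_0[(P_j/P_0)·(P_k/P_0)] ≤ 1 + tanh(θ)·(E_j[X_{u_k} X_{v_k}] − E_0[X_{u_k} X_{v_k}]) provided E_0[X_{u_k} X_{v_k}] ≥ 0. -/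
/-- The spin value of a Boolean configuration entry. -/
def spin (b : Bool) : ℝ := if b then 1 else -1

/-- Energy of the zero-field Ising model with edge set `E`, all edge weights one. -/
noncomputable def isingEnergy (d : ℕ) (θ : ℝ) (E : Finset (Fin d × Fin d))
    (x : Fin d → Bool) : ℝ :=
  θ * ∑ e ∈ E, spin (x e.1) * spin (x e.2)

/-- Partition function. -/
noncomputable def isingZ (d : ℕ) (θ : ℝ) (E : Finset (Fin d × Fin d)) : ℝ :=
  ∑ x : Fin d → Bool, Real.exp (isingEnergy d θ E x)

/-- Gibbs probability of a configuration. -/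
noncomputable def isingP (d : ℕ) (θ : ℝ) (E : Finset (Fin d × Fin d))
    (x : Fin d → Bool) : ℝ :=
  Real.exp (isingEnergy d θ E x) / isingZ d θ E

/-- Expectation under the Gibbs measure. -/
noncomputable def isingE (d : ℕ) (θ : ℝ) (E : Finset (Fin d × Fin d))
    (f : (Fin d → Bool) → ℝ) : ℝ :=
  ∑ x : Fin d → Bool, f x * isingP d θ E x


lemma spin_beq (a b : Bool) : spin (a == b) = spin a * spin b := by
  cases a <;> cases b <;> simp [spin]

lemma spin_mul_le_one (a b : Bool) : spin a * spin b ≤ 1 := by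
  cases a <;> cases b <;> norm_num [spin]

lemma neg_one_le_spin_mul (a b : Bool) : -1 ≤ spin a * spin b := by
  cases a <;> cases b <;> norm_num [spin]

lemma exp_mul_spin (c : ℝ) (a b : Bool) :
    Real.exp (c * (spin a * spin b)) = Real.cosh c + Real.sinh c * (spin a * spin b) := by
  cases a <;> cases b <;> simp [spin, Real.cosh_eq, Real.sinh_eq] <;> ring

lemma sum_spinProd_nonneg (d : ℕ) (A : Multiset (Fin d)) :
    0 ≤ ∑ x : Fin d → Bool, (A.map fun a => spin (x a)).prod := by
  have h : ∀ x : Fin d → Bool, (A.map fun a => spin (x a)).prod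
      = ∏ i : Fin d, spin (x i) ^ A.count i := by
    intro x
    rw [Finset.prod_multiset_map_count]
    refine Finset.prod_subset (Finset.subset_univ A.toFinset) ?_
    intro i _ hi
    simp [Multiset.count_eq_zero_of_notMem (by simpa using hi)]
  simp_rw [h]
  rw [← Fintype.prod_sum (fun (i : Fin d) (b : Bool) => spin b ^ A.count i)]
  apply Finset.prod_nonneg
  intro i _
  rw [Fintype.sum_bool]
  norm_num [spin]
  rcases Nat.even_or_odd (A.count i) with he | ho
  · rw [he.neg_one_pow]; norm_num
  · rw [ho.neg_one_pow]; norm_num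

lemma griffiths1 (d : ℕ) (β : Fin d × Fin d → ℝ) (E : Finset (Fin d × Fin d))
    (hβ : ∀ e ∈ E, 0 ≤ β e) (A : Multiset (Fin d)) :
    0 ≤ ∑ x : Fin d → Bool, (A.map fun a => spin (x a)).prod *
      Real.exp (∑ e ∈ E, β e * (spin (x e.1) * spin (x e.2))) := by
  classical
  induction E using Finset.induction_on generalizing A with
  | empty => simpa using sum_spinProd_nonneg d A
  | @insert e₀ E' he ih =>
    have hβ0 : 0 ≤ β e₀ := hβ e₀ (Finset.mem_insert_self _ _)
    have hβE : ∀ e ∈ E', 0 ≤ β e := fun e hm => hβ e (Finset.mem_insert_of_mem hm)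
    have point : ∀ x : Fin d → Bool,
        (A.map fun a => spin (x a)).prod *
          Real.exp (∑ e ∈ insert e₀ E', β e * (spin (x e.1) * spin (x e.2)))
        = Real.cosh (β e₀) * ((A.map fun a => spin (x a)).prod *
            Real.exp (∑ e ∈ E', β e * (spin (x e.1) * spin (x e.2))))
          + Real.sinh (β e₀) * (((e₀.1 ::ₘ e₀.2 ::ₘ A).map fun a => spin (x a)).prod *
            Real.exp (∑ e ∈ E', β e * (spin (x e.1) * spin (x e.2)))) := by
      intro x
      rw [Finset.sum_insert he, Real.exp_add, exp_mul_spin]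
      simp only [Multiset.map_cons, Multiset.prod_cons]
      ring
    simp_rw [point]
    rw [Finset.sum_add_distrib, ← Finset.mul_sum, ← Finset.mul_sum]
    exact add_nonneg (mul_nonneg (Real.cosh_pos _).le (ih hβE A))
      (mul_nonneg (Real.sinh_nonneg_iff.mpr hβ0) (ih hβE _))

lemma griffiths1' (d : ℕ) (β : Fin d × Fin d → ℝ) (E : Finset (Fin d × Fin d))
    (hβ : ∀ e ∈ E, 0 ≤ β e) (j k : Fin d × Fin d) :
    0 ≤ ∑ x : Fin d → Bool, spin (x j.1) * spin (x j.2) * (spin (x k.1) * spin (x k.2)) *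
      Real.exp (∑ e ∈ E, β e * (spin (x e.1) * spin (x e.2))) := by
  have h := griffiths1 d β E hβ (j.1 ::ₘ j.2 ::ₘ k.1 ::ₘ k.2 ::ₘ 0)
  simpa [Multiset.map_cons, Multiset.prod_cons, mul_assoc] using h

lemma griffiths2 (d : ℕ) (β : Fin d × Fin d → ℝ) (E : Finset (Fin d × Fin d))
    (hβ : ∀ e ∈ E, 0 ≤ β e) (j k : Fin d × Fin d) :
    (∑ x : Fin d → Bool, spin (x j.1) * spin (x j.2) *
        Real.exp (∑ e ∈ E, β e * (spin (x e.1) * spin (x e.2)))) *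
      (∑ x : Fin d → Bool, spin (x k.1) * spin (x k.2) *
        Real.exp (∑ e ∈ E, β e * (spin (x e.1) * spin (x e.2)))) ≤
    (∑ x : Fin d → Bool, Real.exp (∑ e ∈ E, β e * (spin (x e.1) * spin (x e.2)))) *
      (∑ x : Fin d → Bool, spin (x j.1) * spin (x j.2) * (spin (x k.1) * spin (x k.2)) *
        Real.exp (∑ e ∈ E, β e * (spin (x e.1) * spin (x e.2)))) := by
  classical
  rw [← sub_nonneg]
  set w : (Fin d → Bool) → ℝ :=
    fun x => Real.exp (∑ e ∈ E, β e * (spin (x e.1) * spin (x e.2))) with hw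
  have binv : ∀ a b : Bool, (a == (a == b)) = b := by decide
  have hinv : ∀ x : Fin d → Bool, Function.Involutive
      (fun t : Fin d → Bool => fun i => x i == t i) := by
    intro x t
    funext i
    exact binv (x i) (t i)
  have hww : ∀ x t : Fin d → Bool, w x * w (fun i => x i == t i)
      = Real.exp (∑ e ∈ E, (β e * (1 + spin (t e.1) * spin (t e.2))) *
          (spin (x e.1) * spin (x e.2))) := by
    intro x t
    rw [hw, ← Real.exp_add, ← Finset.sum_add_distrib]
    congr 1
    refine Finset.sum_congr rfl fun e _ => ?_
    simp only [spin_beq]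
    ring
  have key : (∑ x : Fin d → Bool, w x) *
      (∑ x : Fin d → Bool, spin (x j.1) * spin (x j.2) * (spin (x k.1) * spin (x k.2)) * w x)
      - (∑ x : Fin d → Bool, spin (x j.1) * spin (x j.2) * w x) *
        (∑ x : Fin d → Bool, spin (x k.1) * spin (x k.2) * w x)
      = ∑ t : Fin d → Bool, (1 - spin (t k.1) * spin (t k.2)) *
          ∑ x : Fin d → Bool, spin (x j.1) * spin (x j.2) * (spin (x k.1) * spin (x k.2)) *
            Real.exp (∑ e ∈ E, (β e * (1 + spin (t e.1) * spin (t e.2))) *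
              (spin (x e.1) * spin (x e.2))) := by
    rw [mul_comm (∑ x : Fin d → Bool, w x) _, Finset.sum_mul_sum, Finset.sum_mul_sum,
      ← Finset.sum_sub_distrib]
    have inner : ∀ x : Fin d → Bool,
        (∑ y : Fin d → Bool, (spin (x j.1) * spin (x j.2) * (spin (x k.1) * spin (x k.2)) * w x) * w y)
        - ∑ y : Fin d → Bool, (spin (x j.1) * spin (x j.2) * w x) * (spin (y k.1) * spin (y k.2) * w y)
        = ∑ t : Fin d → Bool, (1 - spin (t k.1) * spin (t k.2)) *
            (spin (x j.1) * spin (x j.2) * (spin (x k.1) * spin (x k.2)) *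
              Real.exp (∑ e ∈ E, (β e * (1 + spin (t e.1) * spin (t e.2))) *
                (spin (x e.1) * spin (x e.2)))) := by
      intro x
      rw [← Finset.sum_sub_distrib]
      refine (Fintype.sum_bijective (fun t : Fin d → Bool => fun i => x i == t i)
        (hinv x).bijective _ _ fun t => ?_).symm
      simp only []
      rw [← hww x t, spin_beq, spin_beq]
      ring
    rw [Finset.sum_congr rfl fun x _ => inner x, Finset.sum_comm]
    refine Finset.sum_congr rfl fun t _ => ?_
    rw [Finset.mul_sum]
  rw [key]
  refine Finset.sum_nonneg fun t _ => mul_nonneg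
    (by linarith [spin_mul_le_one (t k.1) (t k.2)]) ?_
  exact griffiths1' d _ E (fun e he => mul_nonneg (hβ e he)
    (by linarith [neg_one_le_spin_mul (t e.1) (t e.2)])) j k

lemma isingZ_pos (d : ℕ) (θ : ℝ) (E : Finset (Fin d × Fin d)) : 0 < isingZ d θ E :=
  Finset.sum_pos (fun _ _ => Real.exp_pos _) Finset.univ_nonempty

lemma exp_energy_insert (d : ℕ) (θ : ℝ) (E0 : Finset (Fin d × Fin d))
    (e : Fin d × Fin d) (he : e ∉ E0) (x : Fin d → Bool) :
    Real.exp (isingEnergy d θ (insert e E0) x)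
      = (Real.cosh θ + Real.sinh θ * (spin (x e.1) * spin (x e.2))) *
          Real.exp (isingEnergy d θ E0 x) := by
  unfold isingEnergy
  rw [Finset.sum_insert he, mul_add, Real.exp_add, exp_mul_spin]

lemma isingZ_insert (d : ℕ) (θ : ℝ) (E0 : Finset (Fin d × Fin d))
    (e : Fin d × Fin d) (he : e ∉ E0) :
    isingZ d θ (insert e E0) = Real.cosh θ * isingZ d θ E0 +
      Real.sinh θ * ∑ x : Fin d → Bool,
        spin (x e.1) * spin (x e.2) * Real.exp (isingEnergy d θ E0 x) := by
  unfold isingZ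
  calc (∑ x : Fin d → Bool, Real.exp (isingEnergy d θ (insert e E0) x))
      = ∑ x : Fin d → Bool, (Real.cosh θ * Real.exp (isingEnergy d θ E0 x)
          + Real.sinh θ * (spin (x e.1) * spin (x e.2) * Real.exp (isingEnergy d θ E0 x))) :=
        Finset.sum_congr rfl fun x _ => by rw [exp_energy_insert d θ E0 e he x]; ring
    _ = _ := by rw [Finset.sum_add_distrib, ← Finset.mul_sum, ← Finset.mul_sum]

lemma isingE_eq (d : ℕ) (θ : ℝ) (E : Finset (Fin d × Fin d)) (f : (Fin d → Bool) → ℝ) :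
    isingE d θ E f
      = (∑ x : Fin d → Bool, f x * Real.exp (isingEnergy d θ E x)) / isingZ d θ E := by
  unfold isingE isingP
  rw [Finset.sum_div]
  exact Finset.sum_congr rfl fun x _ => by rw [mul_div_assoc]

/-- Lemma (Edge Addition): for graphs `G_j, G_k` obtained from `G_0` by adding single edges
`e_j, e_k`, the `P_0`-expectation of `(P_j/P_0)(P_k/P_0)` equals
`1 + (E_j[X_{u_k}X_{v_k}] - E_0[X_{u_k}X_{v_k}])/(E_0[X_{u_k}X_{v_k}] + coth θ)`, and is bounded
by `1 + tanh θ (E_j[X_{u_k}X_{v_k}] - E_0[X_{u_k}X_{v_k}])` when `E_0[X_{u_k}X_{v_k}] ≥ 0`. -/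
theorem edge_addition_chi_sq (d : ℕ) (θ : ℝ) (hθ : 0 < θ)
    (E0 : Finset (Fin d × Fin d)) (ej ek : Fin d × Fin d)
    (hej : ej ∉ E0) (hek : ek ∉ E0) (hej' : ej.1 ≠ ej.2) (hek' : ek.1 ≠ ek.2) :
    isingE d θ E0 (fun x =>
        (isingP d θ (insert ej E0) x / isingP d θ E0 x) *
        (isingP d θ (insert ek E0) x / isingP d θ E0 x))
      = 1 +
        (isingE d θ (insert ej E0) (fun x => spin (x ek.1) * spin (x ek.2))
          - isingE d θ E0 (fun x => spin (x ek.1) * spin (x ek.2)))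
        / (isingE d θ E0 (fun x => spin (x ek.1) * spin (x ek.2))
            + Real.cosh θ / Real.sinh θ)
    ∧ (0 ≤ isingE d θ E0 (fun x => spin (x ek.1) * spin (x ek.2)) →
        isingE d θ E0 (fun x =>
            (isingP d θ (insert ej E0) x / isingP d θ E0 x) *
            (isingP d θ (insert ek E0) x / isingP d θ E0 x))
          ≤ 1 + Real.tanh θ *
              (isingE d θ (insert ej E0) (fun x => spin (x ek.1) * spin (x ek.2))
                - isingE d θ E0 (fun x => spin (x ek.1) * spin (x ek.2)))) := by
  classical
  have hc : (0:ℝ) < Real.cosh θ := Real.cosh_pos θ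
  have hs : (0:ℝ) < Real.sinh θ := Real.sinh_pos_iff.mpr hθ
  rw [Real.tanh_eq_sinh_div_cosh]
  set c := Real.cosh θ with hcdef
  set s := Real.sinh θ with hsdef
  set Z0 := isingZ d θ E0 with hZ0def
  have hZ0 : 0 < Z0 := isingZ_pos d θ E0
  set Tj := ∑ x : Fin d → Bool,
    spin (x ej.1) * spin (x ej.2) * Real.exp (isingEnergy d θ E0 x) with hTjdef
  set Tk := ∑ x : Fin d → Bool,
    spin (x ek.1) * spin (x ek.2) * Real.exp (isingEnergy d θ E0 x) with hTkdef
  set U := ∑ x : Fin d → Bool,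
    spin (x ej.1) * spin (x ej.2) * (spin (x ek.1) * spin (x ek.2)) *
      Real.exp (isingEnergy d θ E0 x) with hUdef
  have hZj : isingZ d θ (insert ej E0) = c * Z0 + s * Tj := isingZ_insert d θ E0 ej hej
  have hZk : isingZ d θ (insert ek E0) = c * Z0 + s * Tk := isingZ_insert d θ E0 ek hek
  have hZ0sum : (∑ x : Fin d → Bool, Real.exp (isingEnergy d θ E0 x)) = Z0 := rfl
  have hne0 : Z0 ≠ 0 := hZ0.ne'
  have hne1 : c ≠ 0 := hc.ne'
  have hne2 : s ≠ 0 := hs.ne'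
  have hZjpos : 0 < c * Z0 + s * Tj := hZj ▸ isingZ_pos d θ (insert ej E0)
  have hZkpos : 0 < c * Z0 + s * Tk := hZk ▸ isingZ_pos d θ (insert ek E0)
  -- correlation expectations
  have hE0k : isingE d θ E0 (fun x => spin (x ek.1) * spin (x ek.2)) = Tk / Z0 := by
    rw [isingE_eq]
  have hEjk : isingE d θ (insert ej E0) (fun x => spin (x ek.1) * spin (x ek.2))
      = (c * Tk + s * U) / (c * Z0 + s * Tj) := by
    rw [isingE_eq, hZj]
    congr 1
    calc (∑ x : Fin d → Bool,
          spin (x ek.1) * spin (x ek.2) * Real.exp (isingEnergy d θ (insert ej E0) x))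
        = ∑ x : Fin d → Bool,
            (c * (spin (x ek.1) * spin (x ek.2) * Real.exp (isingEnergy d θ E0 x))
             + s * (spin (x ej.1) * spin (x ej.2) * (spin (x ek.1) * spin (x ek.2)) *
                 Real.exp (isingEnergy d θ E0 x))) :=
          Finset.sum_congr rfl fun x _ => by rw [exp_energy_insert d θ E0 ej hej x]; ring
      _ = c * Tk + s * U := by
          rw [Finset.sum_add_distrib, ← Finset.mul_sum, ← Finset.mul_sum, hTkdef, hUdef]
  -- the chi-square quantity
  have hLHS : isingE d θ E0 (fun x =>
        (isingP d θ (insert ej E0) x / isingP d θ E0 x) *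
        (isingP d θ (insert ek E0) x / isingP d θ E0 x))
      = Z0 * (c*c*Z0 + c*s*Tk + c*s*Tj + s*s*U) / ((c * Z0 + s * Tj) * (c * Z0 + s * Tk)) := by
    rw [isingE_eq]
    have hterm : ∀ x : Fin d → Bool,
        ((isingP d θ (insert ej E0) x / isingP d θ E0 x) *
          (isingP d θ (insert ek E0) x / isingP d θ E0 x)) *
            Real.exp (isingEnergy d θ E0 x)
        = (Z0 * Z0 / ((c * Z0 + s * Tj) * (c * Z0 + s * Tk))) *
            (c*c * Real.exp (isingEnergy d θ E0 x)
             + c*s * (spin (x ek.1) * spin (x ek.2) * Real.exp (isingEnergy d θ E0 x))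
             + c*s * (spin (x ej.1) * spin (x ej.2) * Real.exp (isingEnergy d θ E0 x))
             + s*s * (spin (x ej.1) * spin (x ej.2) * (spin (x ek.1) * spin (x ek.2)) *
                 Real.exp (isingEnergy d θ E0 x))) := by
      intro x
      unfold isingP
      rw [exp_energy_insert d θ E0 ej hej x, exp_energy_insert d θ E0 ek hek x, hZj, hZk,
        ← hZ0def]
      have hex : Real.exp (isingEnergy d θ E0 x) ≠ 0 := (Real.exp_pos _).ne'
      field_simp
      ring
    rw [Finset.sum_congr rfl fun x _ => hterm x, ← Finset.mul_sum]
    rw [Finset.sum_add_distrib, Finset.sum_add_distrib, Finset.sum_add_distrib,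
      ← Finset.mul_sum, ← Finset.mul_sum, ← Finset.mul_sum, ← Finset.mul_sum,
      ← hTjdef, ← hTkdef, ← hUdef, hZ0sum, ← hZ0def]
    field_simp
  -- Griffiths II
  have hGrif : Tj * Tk ≤ Z0 * U := by
    have hen : ∀ x : Fin d → Bool, isingEnergy d θ E0 x
        = ∑ e ∈ E0, θ * (spin (x e.1) * spin (x e.2)) := fun x => Finset.mul_sum _ _ _
    have h := griffiths2 d (fun _ => θ) E0 (fun e _ => hθ.le) ej ek
    rw [hTjdef, hTkdef, hUdef, hZ0def]
    unfold isingZ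
    simp only [hen]
    exact h
  -- the equality
  have heq : isingE d θ E0 (fun x =>
        (isingP d θ (insert ej E0) x / isingP d θ E0 x) *
        (isingP d θ (insert ek E0) x / isingP d θ E0 x))
      = 1 +
        (isingE d θ (insert ej E0) (fun x => spin (x ek.1) * spin (x ek.2))
          - isingE d θ E0 (fun x => spin (x ek.1) * spin (x ek.2)))
        / (isingE d θ E0 (fun x => spin (x ek.1) * spin (x ek.2)) + c / s) := by
    rw [hLHS, hE0k, hEjk]
    have hden : Tk / Z0 + c / s = (c * Z0 + s * Tk) / (s * Z0) := by
      field_simp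
      ring
    have hne3 : c * Z0 + s * Tj ≠ 0 := hZjpos.ne'
    have hne4 : c * Z0 + s * Tk ≠ 0 := hZkpos.ne'
    rw [hden, div_div_eq_mul_div]
    rw [div_sub_div _ _ hne3 hne0, div_mul_eq_mul_div, div_div,
      one_add_div (mul_ne_zero (mul_ne_zero hne3 hne0) hne4),
      div_eq_div_iff (mul_ne_zero hne3 hne4) (mul_ne_zero (mul_ne_zero hne3 hne0) hne4)]
    ring
  refine ⟨heq, fun hpos => ?_⟩
  rw [heq]
  have hD : 0 ≤ isingE d θ (insert ej E0) (fun x => spin (x ek.1) * spin (x ek.2))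
      - isingE d θ E0 (fun x => spin (x ek.1) * spin (x ek.2)) := by
    rw [hEjk, hE0k]
    have : (c * Tk + s * U) / (c * Z0 + s * Tj) - Tk / Z0
        = s * (Z0 * U - Tj * Tk) / ((c * Z0 + s * Tj) * Z0) := by
      field_simp
      ring
    rw [this]
    exact div_nonneg (mul_nonneg hs.le (by linarith)) (by positivity)
  set D := isingE d θ (insert ej E0) (fun x => spin (x ek.1) * spin (x ek.2))
      - isingE d θ E0 (fun x => spin (x ek.1) * spin (x ek.2))
  have h1 : D / (isingE d θ E0 (fun x => spin (x ek.1) * spin (x ek.2)) + c / s)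
      ≤ D / (c / s) := by
    apply div_le_div_of_nonneg_left hD (div_pos hc hs)
    linarith
  have h2 : D / (c / s) = s / c * D := by
    rw [div_div_eq_mul_div]
    ring
  linarith
end

section
/- Let G be the graph on vertex set V consisting of a complete bipartite graph with left part L of size l and right part R of size r ≥ 3, at inverse temperature θ > 0 with all edge weights 1. For two right-side vertices k, ℓ ∈ R, the zero-field Ising measure satisfies P(X_k·X_ℓ = 1)/P(X_k·X_ℓ = −1) = [Σ_{m=0}^{r−2} binomial(r−2, m)·cosh(θ(r − 2m))^l] / [Σ_{m=0}^{r−2} binomial(r−2, m)·cosh(θ(r − 2m − 2))^l]. -/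
/-- Energy of the zero-field ferromagnetic Ising model on the complete bipartite graph
with left part `Fin l` and right part `Fin r`, at inverse temperature `θ`. -/
noncomputable def bicliqueEnergy (l r : ℕ) (θ : ℝ)
    (p : (Fin l → Bool) × (Fin r → Bool)) : ℝ :=
  θ * (∑ u, spin (p.1 u)) * (∑ v, spin (p.2 v))

lemma sum_exp_spin (l : ℕ) (c : ℝ) :
    ∑ x : Fin l → Bool, Real.exp (c * ∑ u, spin (x u)) = (2 * Real.cosh c) ^ l := by
  have h1 : ∀ x : Fin l → Bool,
      Real.exp (c * ∑ u, spin (x u)) = ∏ u, Real.exp (c * spin (x u)) := fun x => by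
    rw [Finset.mul_sum, Real.exp_sum]
  simp_rw [h1]
  have h2 := Finset.prod_univ_sum (fun _ : Fin l => (Finset.univ : Finset Bool))
    (fun _ b => Real.exp (c * spin b))
  rw [Fintype.piFinset_univ] at h2
  rw [← h2, Finset.prod_const, Finset.card_univ, Fintype.card_fin]
  congr 1
  rw [Fintype.sum_bool]
  simp only [spin, if_pos, if_neg, Bool.false_eq_true, ite_true, ite_false, mul_one, mul_neg_one]
  rw [Real.cosh_eq]
  ring

/-- Equivalence between finsets of `Fin n` and boolean configurations. -/
def finsetBoolEquiv (n : ℕ) : Finset (Fin n) ≃ (Fin n → Bool) where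
  toFun s := fun v => decide (v ∈ s)
  invFun y := Finset.univ.filter (fun v => y v = true)
  left_inv s := by ext v; simp
  right_inv y := by funext v; simp

lemma spin_sum_finset {n : ℕ} (s : Finset (Fin n)) :
    ∑ v, spin (decide (v ∈ s)) = 2 * (s.card : ℝ) - n := by
  have h : ∀ v : Fin n, spin (decide (v ∈ s)) = (if v ∈ s then (2 : ℝ) else 0) - 1 := by
    intro v; by_cases hv : v ∈ s <;> simp [spin, hv] <;> norm_num
  rw [Finset.sum_congr rfl fun v _ => h v, Finset.sum_sub_distrib]
  rw [Finset.sum_ite_mem, Finset.univ_inter, Finset.sum_const, Finset.sum_const,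
    Finset.card_univ, Fintype.card_fin]
  push_cast
  ring

lemma key_fiber {r : ℕ} (w u : Finset (Fin r)) (huw : u ⊆ w) (G : ℕ → ℝ) :
    ∑ s : Finset (Fin r), (if s ∩ w = u then G s.card else 0)
      = ∑ t ∈ ((Finset.univ : Finset (Fin r)) \ w).powerset, G (t.card + u.card) := by
  rw [← Finset.sum_filter]
  refine Finset.sum_nbij' (fun s => s \ w) (fun t => t ∪ u) ?_ ?_ ?_ ?_ ?_
  · intro s hs
    simp only [Finset.mem_powerset, Finset.subset_sdiff]
    exact ⟨Finset.subset_univ _, Finset.sdiff_disjoint⟩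
  · intro t ht
    simp only [Finset.mem_powerset, Finset.subset_sdiff] at ht
    simp only [Finset.mem_filter, Finset.mem_univ, true_and]
    rw [Finset.union_inter_distrib_right, (Finset.disjoint_iff_inter_eq_empty.mp ht.2),
      Finset.empty_union, Finset.inter_eq_left.mpr huw]
  · intro s hs
    simp only [Finset.mem_filter, Finset.mem_univ, true_and] at hs
    show s \ w ∪ u = s
    rw [← hs]
    exact Finset.sdiff_union_inter s w
  · intro t ht
    simp only [Finset.mem_powerset, Finset.subset_sdiff] at ht
    show (t ∪ u) \ w = t
    rw [Finset.union_sdiff_distrib, Finset.sdiff_eq_self_of_disjoint ht.2,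
      Finset.sdiff_eq_empty_iff_subset.mpr huw, Finset.union_empty]
  · intro s hs
    simp only [Finset.mem_filter, Finset.mem_univ, true_and] at hs
    congr 1
    have hdisj : Disjoint (s \ w) u := Finset.disjoint_of_subset_right huw Finset.sdiff_disjoint
    rw [← Finset.card_union_of_disjoint hdisj]
    congr 1
    conv_lhs => rw [← Finset.sdiff_union_inter s w, hs]

lemma inter_ne_of_mem_notmem {r : ℕ} {s u : Finset (Fin r)} {v : Fin r}
    (hvu : v ∈ u) (hvs : v ∉ s) : s ∩ u ≠ u := by
  intro h
  have : v ∈ s ∩ u := by rw [h]; exact hvu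
  exact hvs (Finset.mem_of_mem_inter_left this)

lemma cond_split_eq {r : ℕ} (k ℓ : Fin r) (hkl : k ≠ ℓ) (s : Finset (Fin r)) (a : ℝ) :
    (if (k ∈ s ↔ ℓ ∈ s) then a else 0)
      = (if s ∩ {k, ℓ} = ({k, ℓ} : Finset (Fin r)) then a else 0)
        + (if s ∩ {k, ℓ} = (∅ : Finset (Fin r)) then a else 0) := by
  by_cases hk : k ∈ s <;> by_cases hl : ℓ ∈ s
  · have h1 : s ∩ {k, ℓ} = ({k, ℓ} : Finset (Fin r)) := by
      ext v
      simp only [Finset.mem_inter, Finset.mem_insert, Finset.mem_singleton]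
      constructor
      · tauto
      · rintro (rfl | rfl) <;> simp [hk, hl]
    have h2 : s ∩ {k, ℓ} ≠ (∅ : Finset (Fin r)) := by rw [h1]; simp
    rw [if_pos (iff_of_true hk hl), if_pos h1, if_neg h2, add_zero]
  · have h1 : s ∩ {k, ℓ} ≠ ({k, ℓ} : Finset (Fin r)) :=
      inter_ne_of_mem_notmem (by simp) hl
    have h2 : s ∩ {k, ℓ} ≠ (∅ : Finset (Fin r)) := by
      intro h
      have : k ∈ s ∩ ({k, ℓ} : Finset (Fin r)) := by simp [hk]
      rw [h] at this
      simp at this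
    rw [if_neg (by tauto), if_neg h1, if_neg h2, add_zero]
  · have h1 : s ∩ {k, ℓ} ≠ ({k, ℓ} : Finset (Fin r)) :=
      inter_ne_of_mem_notmem (by simp) hk
    have h2 : s ∩ {k, ℓ} ≠ (∅ : Finset (Fin r)) := by
      intro h
      have : ℓ ∈ s ∩ ({k, ℓ} : Finset (Fin r)) := by simp [hl]
      rw [h] at this
      simp at this
    rw [if_neg (by tauto), if_neg h1, if_neg h2, add_zero]
  · have h1 : s ∩ {k, ℓ} = (∅ : Finset (Fin r)) := by
      ext v
      simp only [Finset.mem_inter, Finset.mem_insert, Finset.mem_singleton,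
        Finset.notMem_empty, iff_false, not_and]
      rintro hv (rfl | rfl) <;> tauto
    have h2 : s ∩ {k, ℓ} ≠ ({k, ℓ} : Finset (Fin r)) := by
      rw [h1]
      intro h
      have : k ∈ (∅ : Finset (Fin r)) := by rw [h]; simp
      simp at this
    rw [if_pos (iff_of_false hk hl), if_neg h2, if_pos h1, zero_add]

lemma cond_split_ne {r : ℕ} (k ℓ : Fin r) (hkl : k ≠ ℓ) (s : Finset (Fin r)) (a : ℝ) :
    (if ¬(k ∈ s ↔ ℓ ∈ s) then a else 0)
      = (if s ∩ {k, ℓ} = ({k} : Finset (Fin r)) then a else 0)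
        + (if s ∩ {k, ℓ} = ({ℓ} : Finset (Fin r)) then a else 0) := by
  by_cases hk : k ∈ s <;> by_cases hl : ℓ ∈ s
  · have h1 : s ∩ {k, ℓ} ≠ ({k} : Finset (Fin r)) := by
      intro h
      have : ℓ ∈ ({k} : Finset (Fin r)) := by rw [← h]; simp [hl]
      simp at this
      exact hkl this.symm
    have h2 : s ∩ {k, ℓ} ≠ ({ℓ} : Finset (Fin r)) := by
      intro h
      have : k ∈ ({ℓ} : Finset (Fin r)) := by rw [← h]; simp [hk]
      simp at this
      exact hkl this
    rw [if_neg (by tauto), if_neg h1, if_neg h2, add_zero]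
  · have h1 : s ∩ {k, ℓ} = ({k} : Finset (Fin r)) := by
      ext v
      simp only [Finset.mem_inter, Finset.mem_insert, Finset.mem_singleton]
      constructor
      · rintro ⟨hv, rfl | rfl⟩
        · rfl
        · exact absurd hv hl
      · rintro rfl; simp [hk]
    have h2 : s ∩ {k, ℓ} ≠ ({ℓ} : Finset (Fin r)) := by
      rw [h1]
      intro h
      have : k ∈ ({ℓ} : Finset (Fin r)) := by rw [← h]; simp
      simp at this
      exact hkl this
    rw [if_pos (by tauto), if_pos h1, if_neg h2, add_zero]
  · have h1 : s ∩ {k, ℓ} = ({ℓ} : Finset (Fin r)) := by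
      ext v
      simp only [Finset.mem_inter, Finset.mem_insert, Finset.mem_singleton]
      constructor
      · rintro ⟨hv, rfl | rfl⟩
        · exact absurd hv hk
        · rfl
      · rintro rfl; simp [hl]
    have h2 : s ∩ {k, ℓ} ≠ ({k} : Finset (Fin r)) := by
      rw [h1]
      intro h
      have : ℓ ∈ ({k} : Finset (Fin r)) := by rw [← h]; simp
      simp at this
      exact hkl this.symm
    rw [if_pos (by tauto), if_neg h2, if_pos h1, zero_add]
  · have h1 : s ∩ {k, ℓ} ≠ ({k} : Finset (Fin r)) := by
      intro h
      have : k ∈ s ∩ ({k, ℓ} : Finset (Fin r)) := by rw [h]; simp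
      exact hk (Finset.mem_of_mem_inter_left this)
    have h2 : s ∩ {k, ℓ} ≠ ({ℓ} : Finset (Fin r)) := by
      intro h
      have : ℓ ∈ s ∩ ({k, ℓ} : Finset (Fin r)) := by rw [h]; simp
      exact hl (Finset.mem_of_mem_inter_left this)
    rw [if_neg (by tauto), if_neg h1, if_neg h2, add_zero]

/-- Exact odds `P(X_k X_ℓ = 1)/P(X_k X_ℓ = -1)` for two right-side vertices of an
`l × r` biclique, `r ≥ 3`. -/
theorem biclique_odds_identity (l r : ℕ) (hl : 1 ≤ l) (hr : 3 ≤ r) (θ : ℝ) (hθ : 0 < θ)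
    (k ℓ : Fin r) (hkl : k ≠ ℓ) :
    (∑ p : (Fin l → Bool) × (Fin r → Bool),
        if p.2 k = p.2 ℓ then Real.exp (bicliqueEnergy l r θ p) else 0) /
      (∑ p : (Fin l → Bool) × (Fin r → Bool),
        if p.2 k ≠ p.2 ℓ then Real.exp (bicliqueEnergy l r θ p) else 0)
      = (∑ m ∈ Finset.range (r - 1),
            ((r - 2).choose m : ℝ) * Real.cosh (θ * ((r : ℝ) - 2 * m)) ^ l) /
        (∑ m ∈ Finset.range (r - 1),
            ((r - 2).choose m : ℝ) * Real.cosh (θ * ((r : ℝ) - 2 * m - 2)) ^ l) := by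
  classical
  set G : ℕ → ℝ := fun m => (2 * Real.cosh (θ * (2 * (m : ℝ) - r))) ^ l with hG
  set T : Finset (Fin r) := (Finset.univ : Finset (Fin r)) \ {k, ℓ} with hT
  have hcard2 : ({k, ℓ} : Finset (Fin r)).card = 2 := by
    rw [Finset.card_insert_of_notMem (by simp [hkl]), Finset.card_singleton]
  have hTcard : T.card = r - 2 := by
    rw [hT, Finset.card_sdiff_of_subset (Finset.subset_univ _), Finset.card_univ, Fintype.card_fin, hcard2]
  -- Step 1: integrate out the left spins.
  have step1 : ∀ (P : (Fin r → Bool) → Prop) (inst : DecidablePred P),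
      (∑ p : (Fin l → Bool) × (Fin r → Bool),
          if P p.2 then Real.exp (bicliqueEnergy l r θ p) else 0)
        = ∑ s : Finset (Fin r), (if P (fun v => decide (v ∈ s)) then G s.card else 0) := by
    intro P inst
    rw [Fintype.sum_prod_type_right]
    have e1 : ∀ y : Fin r → Bool,
        (∑ x : Fin l → Bool, if P (x, y).2 then Real.exp (bicliqueEnergy l r θ (x, y)) else 0)
          = if P y then (2 * Real.cosh (θ * ∑ v, spin (y v))) ^ l else 0 := by
      intro y
      by_cases h : P y
      · simp only [h, if_true]
        rw [← sum_exp_spin l (θ * ∑ v, spin (y v))]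
        refine Finset.sum_congr rfl fun x _ => ?_
        congr 1
        simp only [bicliqueEnergy]
        ring
      · simp [h]
    simp_rw [e1]
    refine (Fintype.sum_equiv (finsetBoolEquiv r) _ _ ?_).symm
    intro s
    simp only [finsetBoolEquiv, Equiv.coe_fn_mk]
    rw [spin_sum_finset]
    rfl
  -- powerset sums to range sums
  have pows : ∀ c : ℕ, ∑ t ∈ T.powerset, G (t.card + c)
      = ∑ m ∈ Finset.range (r - 1), ((r - 2).choose m : ℝ) * G (m + c) := by
    intro c
    rw [Finset.sum_powerset_apply_card (fun m => G (m + c)), hTcard]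
    have h21 : r - 2 + 1 = r - 1 := by omega
    rw [h21]
    exact Finset.sum_congr rfl fun m _ => nsmul_eq_mul _ _
  have pows0 : ∑ t ∈ T.powerset, G t.card
      = ∑ m ∈ Finset.range (r - 1), ((r - 2).choose m : ℝ) * G m := by
    rw [Finset.sum_powerset_apply_card G, hTcard]
    rw [show r - 2 + 1 = r - 1 from by omega]
    exact Finset.sum_congr rfl fun m _ => nsmul_eq_mul _ _
  -- closed forms for G
  have Gm : ∀ m : ℕ, G m = 2 ^ l * Real.cosh (θ * ((r : ℝ) - 2 * m)) ^ l := by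
    intro m
    rw [hG]
    have h : θ * (2 * (m : ℝ) - r) = -(θ * ((r : ℝ) - 2 * m)) := by ring
    simp only
    rw [h, Real.cosh_neg, mul_pow]
  have Gm1 : ∀ m : ℕ, G (m + 1) = 2 ^ l * Real.cosh (θ * ((r : ℝ) - 2 * m - 2)) ^ l := by
    intro m
    rw [hG]
    simp only
    push_cast
    have h : θ * (2 * ((m : ℝ) + 1) - r) = -(θ * ((r : ℝ) - 2 * m - 2)) := by ring
    rw [h, Real.cosh_neg, mul_pow]
  -- reflection: sum of G (m+2) equals sum of G m
  have refl2 : ∑ m ∈ Finset.range (r - 1), ((r - 2).choose m : ℝ) * G (m + 2)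
      = ∑ m ∈ Finset.range (r - 1), ((r - 2).choose m : ℝ) * G m := by
    rw [← Finset.sum_range_reflect]
    refine Finset.sum_congr rfl fun m hm => ?_
    rw [Finset.mem_range] at hm
    have hm2 : m ≤ r - 2 := by omega
    have h1 : r - 1 - 1 - m = r - 2 - m := by omega
    rw [h1, Nat.choose_symm hm2]
    congr 1
    have h2 : r - 2 - m + 2 = r - m := by omega
    rw [h2, hG]
    simp only
    rw [Nat.cast_sub (by omega)]
    have h3 : θ * (2 * ((r : ℝ) - m) - r) = -(θ * (2 * (m : ℝ) - r)) := by ring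
    rw [h3, Real.cosh_neg]
  -- numerator
  have hnum : (∑ p : (Fin l → Bool) × (Fin r → Bool),
        if p.2 k = p.2 ℓ then Real.exp (bicliqueEnergy l r θ p) else 0)
      = 2 ^ l * 2 * ∑ m ∈ Finset.range (r - 1),
          ((r - 2).choose m : ℝ) * Real.cosh (θ * ((r : ℝ) - 2 * m)) ^ l := by
    have s1 : (∑ p : (Fin l → Bool) × (Fin r → Bool),
        if p.2 k = p.2 ℓ then Real.exp (bicliqueEnergy l r θ p) else 0)
        = ∑ s : Finset (Fin r),
            (if (fun v => decide (v ∈ s)) k = (fun v => decide (v ∈ s)) ℓ then G s.card else 0) :=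
      step1 (fun y => y k = y ℓ) (fun _ => by infer_instance)
    rw [s1]
    have hc : ∀ s : Finset (Fin r),
        (if (fun v => decide (v ∈ s)) k = (fun v => decide (v ∈ s)) ℓ then G s.card else 0)
          = if (k ∈ s ↔ ℓ ∈ s) then G s.card else 0 := by
      intro s
      refine if_congr ?_ rfl rfl
      simp [decide_eq_decide]
    simp_rw [hc, cond_split_eq k ℓ hkl, Finset.sum_add_distrib,
      key_fiber ({k, ℓ} : Finset (Fin r)) {k, ℓ} (subset_refl _) G,
      key_fiber ({k, ℓ} : Finset (Fin r)) ∅ (Finset.empty_subset _) G,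
      hcard2, Finset.card_empty]
    rw [← hT, pows 2, pows 0]
    simp only [Nat.add_zero]
    rw [refl2, ← two_mul, Finset.mul_sum, Finset.mul_sum]
    refine Finset.sum_congr rfl fun m _ => ?_
    rw [Gm m]
    ring
  -- denominator
  have hden : (∑ p : (Fin l → Bool) × (Fin r → Bool),
        if p.2 k ≠ p.2 ℓ then Real.exp (bicliqueEnergy l r θ p) else 0)
      = 2 ^ l * 2 * ∑ m ∈ Finset.range (r - 1),
          ((r - 2).choose m : ℝ) * Real.cosh (θ * ((r : ℝ) - 2 * m - 2)) ^ l := by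
    have s1 : (∑ p : (Fin l → Bool) × (Fin r → Bool),
        if p.2 k ≠ p.2 ℓ then Real.exp (bicliqueEnergy l r θ p) else 0)
        = ∑ s : Finset (Fin r),
            (if (fun v => decide (v ∈ s)) k ≠ (fun v => decide (v ∈ s)) ℓ then G s.card else 0) :=
      step1 (fun y => y k ≠ y ℓ) (fun _ => by infer_instance)
    rw [s1]
    have hc : ∀ s : Finset (Fin r),
        (if (fun v => decide (v ∈ s)) k ≠ (fun v => decide (v ∈ s)) ℓ then G s.card else 0)
          = if ¬(k ∈ s ↔ ℓ ∈ s) then G s.card else 0 := by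
      intro s
      refine if_congr ?_ rfl rfl
      simp [decide_eq_decide]
    simp_rw [hc, cond_split_ne k ℓ hkl, Finset.sum_add_distrib,
      key_fiber ({k, ℓ} : Finset (Fin r)) {k} (by simp) G,
      key_fiber ({k, ℓ} : Finset (Fin r)) {ℓ} (by simp) G,
      Finset.card_singleton]
    rw [← hT, pows 1, ← two_mul, Finset.mul_sum, Finset.mul_sum]
    refine Finset.sum_congr rfl fun m _ => ?_
    rw [Gm1 m]
    ring
  rw [hnum, hden]
  exact mul_div_mul_left _ _ (by positivity)
end

section
/- Let G be an l × r complete bipartite graph with r ≥ 2, and let k, ℓ be two right-side vertices. Under the zero-field ferromagnetic Ising model at inverse temperature θ satisfying θ ≥ 2/l, and θ ≥ 3/(r−2) if r > 2 (or θ ≥ log 2 if r = 2), one has E[X_k·X_ℓ] ≥ 1 − 2(r−1)/(exp(θl) + r − 1). -/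
set_option maxHeartbeats 1000000

set_option linter.unnecessarySeqFocus false

lemma sum_prod_bool {n : ℕ} (w : Fin n → Bool → ℝ) :
    ∑ y : Fin n → Bool, ∏ v, w v (y v) = ∏ v, (w v true + w v false) := by
  have h : ∀ v : Fin n, (w v true + w v false) = ∑ b : Bool, w v b := by
    intro v; simp [Fintype.sum_bool]
  simp_rw [h]
  rw [Finset.prod_univ_sum]
  rw [Fintype.piFinset_univ]

lemma inner_Z {r : ℕ} (s : ℝ) :
    ∑ y : Fin r → Bool, Real.exp (s * ∑ v, spin (y v))
      = (Real.exp s + Real.exp (-s)) ^ r := by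
  have : ∀ y : Fin r → Bool, Real.exp (s * ∑ v, spin (y v)) = ∏ v, Real.exp (s * spin (y v)) := by
    intro y
    rw [Finset.mul_sum, Real.exp_sum]
  simp_rw [this]
  rw [sum_prod_bool (fun v b => Real.exp (s * spin b))]
  simp [spin, Finset.prod_const]

lemma inner_N {r : ℕ} (hr : 2 ≤ r) (k ℓ : Fin r) (hkl : k ≠ ℓ) (s : ℝ) :
    ∑ y : Fin r → Bool, spin (y k) * spin (y ℓ) * Real.exp (s * ∑ v, spin (y v))
      = (Real.exp s - Real.exp (-s)) ^ 2 * (Real.exp s + Real.exp (-s)) ^ (r - 2) := by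
  have key : ∀ y : Fin r → Bool,
      spin (y k) * spin (y ℓ) * Real.exp (s * ∑ v, spin (y v))
        = ∏ v, ((if v = k ∨ v = ℓ then spin (y v) else 1) * Real.exp (s * spin (y v))) := by
    intro y
    rw [Finset.prod_mul_distrib]
    have h1 : ∏ v, (if v = k ∨ v = ℓ then spin (y v) else 1) = spin (y k) * spin (y ℓ) := by
      rw [← Finset.prod_subset (Finset.subset_univ ({k, ℓ} : Finset (Fin r)))
        (by intro x _ hx; simp only [Finset.mem_insert, Finset.mem_singleton] at hx
            rw [if_neg]; push_neg; tauto)]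
      rw [Finset.prod_pair hkl]
      simp
    have h2 : ∏ v, Real.exp (s * spin (y v)) = Real.exp (s * ∑ v, spin (y v)) := by
      rw [Finset.mul_sum, Real.exp_sum]
    rw [h1, h2]
  simp_rw [key]
  rw [sum_prod_bool (fun v b => (if v = k ∨ v = ℓ then spin b else 1) * Real.exp (s * spin b))]
  have h3 : ∀ v : Fin r,
      ((if v = k ∨ v = ℓ then spin true else 1) * Real.exp (s * spin true)
        + (if v = k ∨ v = ℓ then spin false else 1) * Real.exp (s * spin false))
      = (if v = k ∨ v = ℓ then (Real.exp s - Real.exp (-s)) else (Real.exp s + Real.exp (-s))) := by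
    intro v
    by_cases h : v = k ∨ v = ℓ <;> simp [h, spin] <;> ring
  rw [Finset.prod_congr rfl (fun v _ => h3 v)]
  rw [Finset.prod_ite]
  have hcard1 : (Finset.univ.filter (fun v : Fin r => v = k ∨ v = ℓ)).card = 2 := by
    have hfilt : Finset.univ.filter (fun v : Fin r => v = k ∨ v = ℓ) = {k, ℓ} := by
      ext v; simp [Finset.mem_insert]
    rw [hfilt, Finset.card_insert_of_notMem (by simpa using hkl), Finset.card_singleton]
  have hcard2 : (Finset.univ.filter (fun v : Fin r => ¬(v = k ∨ v = ℓ))).card = r - 2 := by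
    have := Finset.card_filter_add_card_filter_not
      (s := (Finset.univ : Finset (Fin r))) (p := fun v => v = k ∨ v = ℓ)
    simp only [Finset.card_univ, Fintype.card_fin] at this
    omega
  rw [Finset.prod_const, Finset.prod_const, hcard1, hcard2]

lemma key3 (l r : ℕ) (hl : 1 ≤ l) (hr3 : 3 ≤ r) (θ : ℝ)
    (hθl2 : 2 ≤ θ * l) (hθr : 3 / ((r : ℝ) - 2) ≤ θ)
    (c : (Fin l → Bool) → ℝ) (hcpos : ∀ x, 0 < c x)
    (x₀ : Fin l → Bool)
    (hcx0 : Real.exp (θ * l) + Real.exp (-(θ * l)) ≤ c x₀) :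
    2 * (Real.exp (θ * l) + (r : ℝ) - 1) * (∑ x : Fin l → Bool, c x ^ (r - 2))
      ≤ ((r : ℝ) - 1) * ∑ x : Fin l → Bool, c x ^ r := by
  classical
  set E := Real.exp (θ * l) with hE
  set u := Real.exp (θ * l / 2) with hu
  have hEu : E = u ^ 2 := by
    rw [hE, hu, pow_two, ← Real.exp_add]; congr 1; ring
  have hu2 : (2 : ℝ) ≤ u := by
    have h1 : (1 : ℝ) ≤ θ * l / 2 := by linarith
    have := Real.add_one_le_exp (1 : ℝ)
    have h2 : Real.exp 1 ≤ u := by rw [hu]; exact Real.exp_le_exp.2 h1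
    linarith [Real.add_one_le_exp (1:ℝ)]
  have hrR : (3 : ℝ) ≤ (r : ℝ) := by exact_mod_cast hr3
  have hr2R : (0 : ℝ) < (r : ℝ) - 2 := by linarith
  have hrpos : (0 : ℝ) < (r : ℝ) := by linarith
  have hθpos : 0 < θ := lt_of_lt_of_le (by positivity) hθr
  have hθr' : 3 ≤ θ * ((r : ℝ) - 2) := (div_le_iff₀ hr2R).mp hθr
  set p := (r : ℝ) / ((r : ℝ) - 2) with hp
  set q := (r : ℝ) / 2 with hq
  have hpq : Real.HolderConjugate p q := by
    rw [Real.holderConjugate_iff]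
    constructor
    · rw [hp]; rw [lt_div_iff₀ hr2R]; linarith
    · rw [hp, hq, inv_div, inv_div, ← add_div,
        show (r : ℝ) - 2 + 2 = (r : ℝ) by ring, div_self hrpos.ne']
  set Z := ∑ x : Fin l → Bool, c x ^ r with hZ
  set T := ∑ x : Fin l → Bool, c x ^ (r - 2) with hT
  have hZpos : 0 < Z := by
    rw [hZ]; exact Finset.sum_pos (fun x _ => pow_pos (hcpos x) r) Finset.univ_nonempty
  have hcard : ∑ _x : Fin l → Bool, (1 : ℝ) = (2 : ℝ) ^ l := by
    rw [Finset.sum_const, Finset.card_univ]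
    simp [Fintype.card_fun]
  have holder : T ≤ Z ^ (1 / p) * ((2 : ℝ) ^ l) ^ (1 / q) := by
    have h := Real.inner_le_Lp_mul_Lq_of_nonneg (s := (Finset.univ : Finset (Fin l → Bool)))
      (f := fun x => c x ^ (r - 2)) (g := fun _ => (1 : ℝ)) hpq
      (fun i _ => pow_nonneg (hcpos i).le _) (fun i _ => zero_le_one)
    simp only [mul_one, Real.one_rpow] at h
    have hfp : ∀ x : Fin l → Bool, (c x ^ (r - 2) : ℝ) ^ p = c x ^ r := by
      intro x
      rw [← Real.rpow_natCast (c x) (r - 2), ← Real.rpow_natCast (c x) r,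
        ← Real.rpow_mul (hcpos x).le]
      congr 1
      rw [Nat.cast_sub (by omega : 2 ≤ r), hp]
      field_simp
      norm_num
    simp only [hfp, hcard] at h
    exact h
  have hBu : ((2 : ℝ) ^ l) ^ (1 / q) ≤ u := by
    have h2l : ((2 : ℝ) ^ l) = Real.exp (l * Real.log 2) := by
      rw [← Real.rpow_natCast (2:ℝ) l, Real.rpow_def_of_pos two_pos]
      congr 1; ring
    rw [h2l, ← Real.exp_log (Real.exp_pos (l * Real.log 2)), Real.log_exp]
    rw [show ((Real.exp (l * Real.log 2)) ^ (1/q) : ℝ) = Real.exp (l * Real.log 2 * (1/q)) from ?_]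
    · rw [hu, Real.exp_le_exp]
      have h4 : 4 * Real.log 2 ≤ θ * r := by
        have hlog2 : Real.log 2 < 0.6931471808 := Real.log_two_lt_d9
        nlinarith [hθpos]
      have e1 : (l : ℝ) * Real.log 2 * (1 / q) = 4 * Real.log 2 * ((l : ℝ) / (4 * q)) := by
        field_simp
      have e2 : θ * l / 2 = θ * r * ((l : ℝ) / (4 * q)) := by
        rw [hq]; field_simp; ring
      rw [e1, e2]
      exact mul_le_mul_of_nonneg_right h4 (by positivity)
    · rw [Real.rpow_def_of_pos (Real.exp_pos _), Real.log_exp]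
  have hq0 : 0 ≤ 1 / q := by rw [hq]; exact div_nonneg zero_le_one (by positivity)
  have hZq : (u ^ 2) ^ 2 + 2 ≤ Z ^ (1 / q) := by
    have hZ1 : c x₀ ^ r ≤ Z := by
      rw [hZ]
      exact Finset.single_le_sum (f := fun x => c x ^ r)
        (fun x _ => pow_nonneg (hcpos x).le _) (Finset.mem_univ x₀)
    have h1 : (c x₀ ^ r) ^ (1 / q) ≤ Z ^ (1 / q) :=
      Real.rpow_le_rpow (pow_nonneg (hcpos x₀).le _) hZ1 hq0
    have h2 : (c x₀ ^ r : ℝ) ^ (1 / q) = c x₀ ^ 2 := by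
      rw [← Real.rpow_natCast (c x₀) r, ← Real.rpow_mul (hcpos x₀).le]
      rw [show (r : ℝ) * (1 / q) = 2 by rw [hq]; field_simp]
      rw [show (2:ℝ) = ((2:ℕ):ℝ) by norm_num, Real.rpow_natCast]
    have hmul : Real.exp (θ * l) * Real.exp (-(θ * l)) = 1 := by
      rw [← Real.exp_add]; simp
    have hieE : 0 < Real.exp (-(θ * l)) := Real.exp_pos _
    have h3 : (u ^ 2) ^ 2 + 2 ≤ c x₀ ^ 2 := by
      have hcx : E + Real.exp (-(θ * l)) ≤ c x₀ := hcx0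
      have hsq : E ^ 2 + 2 ≤ (E + Real.exp (-(θ * l))) ^ 2 := by
        nlinarith [hmul, sq_nonneg (Real.exp (-(θ * l)))]
      have hsq2 : (E + Real.exp (-(θ * l))) ^ 2 ≤ c x₀ ^ 2 :=
        pow_le_pow_left₀ (by positivity) hcx 2
      have : (u ^ 2) ^ 2 + 2 = E ^ 2 + 2 := by rw [hEu]
      linarith
    rw [h2] at h1
    linarith
  have hR2 : (2 : ℝ) ≤ (r : ℝ) - 1 := by linarith
  have hEpos : 0 < E := Real.exp_pos _
  have hfac : (0 : ℝ) ≤ 2 * (E + (r : ℝ) - 1) := by nlinarith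
  calc 2 * (E + (r : ℝ) - 1) * T
      ≤ 2 * (E + (r : ℝ) - 1) * (Z ^ (1 / p) * ((2 : ℝ) ^ l) ^ (1 / q)) :=
        mul_le_mul_of_nonneg_left holder hfac
    _ = Z ^ (1 / p) * (2 * (E + (r : ℝ) - 1) * ((2 : ℝ) ^ l) ^ (1 / q)) := by ring
    _ ≤ Z ^ (1 / p) * (((r : ℝ) - 1) * Z ^ (1 / q)) := by
        refine mul_le_mul_of_nonneg_left ?_ (Real.rpow_nonneg hZpos.le _)
        calc 2 * (E + (r : ℝ) - 1) * ((2 : ℝ) ^ l) ^ (1 / q)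
            ≤ 2 * (E + (r : ℝ) - 1) * u := mul_le_mul_of_nonneg_left hBu hfac
          _ ≤ ((r : ℝ) - 1) * ((u ^ 2) ^ 2 + 2) := by
              have h1 : 2 * u ^ 3 ≤ u ^ 4 := by nlinarith
              have h2 : 4 * u ≤ u ^ 4 := by nlinarith
              nlinarith [hEu, hR2, hu2]
          _ ≤ ((r : ℝ) - 1) * Z ^ (1 / q) :=
              mul_le_mul_of_nonneg_left hZq (by linarith)
    _ = ((r : ℝ) - 1) * (Z ^ (1 / p) * Z ^ (1 / q)) := by ring
    _ = ((r : ℝ) - 1) * Z := by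
        rw [← Real.rpow_add hZpos, one_div, one_div, hpq.inv_add_inv_eq_one, Real.rpow_one]

/-- Low temperature bound: for two right-side vertices `k, ℓ` of an `l × r` biclique,
under `θ ≥ 2/l` and `θ ≥ 3/(r-2)` when `r > 2` (resp. `θ ≥ log 2` when `r = 2`), the
correlation satisfies `E[X_k X_ℓ] ≥ 1 - 2(r-1)/(exp(θ l) + r - 1)`. -/
theorem biclique_low_temp_bound (l r : ℕ) (hl : 1 ≤ l) (hr : 2 ≤ r) (θ : ℝ)
    (hθl : 2 / (l : ℝ) ≤ θ)
    (hθr : 2 < r → 3 / ((r : ℝ) - 2) ≤ θ)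
    (hθr2 : r = 2 → Real.log 2 ≤ θ)
    (k ℓ : Fin r) (hkl : k ≠ ℓ) :
    1 - 2 * ((r : ℝ) - 1) / (Real.exp (θ * l) + (r : ℝ) - 1)
      ≤ (∑ p : (Fin l → Bool) × (Fin r → Bool),
            spin (p.2 k) * spin (p.2 ℓ) * Real.exp (bicliqueEnergy l r θ p)) /
        (∑ p : (Fin l → Bool) × (Fin r → Bool), Real.exp (bicliqueEnergy l r θ p)) := by
  classical
  set c : (Fin l → Bool) → ℝ := fun x =>
    Real.exp (θ * ∑ u, spin (x u)) + Real.exp (-(θ * ∑ u, spin (x u))) with hc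
  set d : (Fin l → Bool) → ℝ := fun x =>
    Real.exp (θ * ∑ u, spin (x u)) - Real.exp (-(θ * ∑ u, spin (x u))) with hd
  have hZr : (∑ p : (Fin l → Bool) × (Fin r → Bool), Real.exp (bicliqueEnergy l r θ p))
      = ∑ x : Fin l → Bool, c x ^ r := by
    rw [Fintype.sum_prod_type]
    refine Finset.sum_congr rfl fun x _ => ?_
    simpa [bicliqueEnergy, mul_assoc] using inner_Z (r := r) (θ * ∑ u, spin (x u))
  have hNr : (∑ p : (Fin l → Bool) × (Fin r → Bool),
        spin (p.2 k) * spin (p.2 ℓ) * Real.exp (bicliqueEnergy l r θ p))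
      = ∑ x : Fin l → Bool, d x ^ 2 * c x ^ (r - 2) := by
    rw [Fintype.sum_prod_type]
    refine Finset.sum_congr rfl fun x _ => ?_
    simpa [bicliqueEnergy, mul_assoc] using inner_N hr k ℓ hkl (θ * ∑ u, spin (x u))
  rw [hZr, hNr]
  -- basic positivity facts
  have hcpos : ∀ x, 0 < c x := fun x => by positivity
  have hd2 : ∀ x, d x ^ 2 = c x ^ 2 - 4 := by
    intro x
    have hmul : Real.exp (θ * ∑ u, spin (x u)) * Real.exp (-(θ * ∑ u, spin (x u))) = 1 := by
      rw [← Real.exp_add]; simp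
    simp only [hc, hd]
    ring_nf
    nlinarith [hmul]

  set Z := ∑ x : Fin l → Bool, c x ^ r with hZdef
  set T := ∑ x : Fin l → Bool, c x ^ (r - 2) with hTdef
  have hZpos : 0 < Z := by
    rw [hZdef]; exact Finset.sum_pos (fun x _ => pow_pos (hcpos x) r) Finset.univ_nonempty
  have hNsum : (∑ x : Fin l → Bool, d x ^ 2 * c x ^ (r - 2)) = Z - 4 * T := by
    have hterm : ∀ x : Fin l → Bool, d x ^ 2 * c x ^ (r - 2)
        = c x ^ r - 4 * c x ^ (r - 2) := by
      intro x
      rw [hd2 x, sub_mul, ← pow_add, (show 2 + (r - 2) = r by omega)]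
    rw [Finset.sum_congr rfl (fun x _ => hterm x), Finset.sum_sub_distrib,
      ← Finset.mul_sum, hZdef, hTdef]
  have hlpos : (0 : ℝ) < l := by exact_mod_cast hl
  have hθl2 : 2 ≤ θ * l := by
    have := (div_le_iff₀ hlpos).mp hθl
    linarith
  have hrR : (2 : ℝ) ≤ (r : ℝ) := by exact_mod_cast hr
  have hEpos : 0 < Real.exp (θ * l) := Real.exp_pos _
  set D := Real.exp (θ * (l : ℝ)) + (r : ℝ) - 1 with hDdef
  have hDpos : 0 < D := by rw [hDdef]; linarith
  -- the two distinguished configurations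
  have hS1 : (∑ u : Fin l, spin ((fun _ => true) u)) = (l : ℝ) := by
    simp [spin]
  have hS0 : (∑ u : Fin l, spin ((fun _ => false) u)) = -(l : ℝ) := by
    simp [spin]
  have hcx1 : c (fun _ => true) = Real.exp (θ * l) + Real.exp (-(θ * l)) := by
    simp only [hc]; rw [hS1]
  have hcx0 : c (fun _ => false) = Real.exp (θ * l) + Real.exp (-(θ * l)) := by
    simp only [hc]; rw [hS0, show θ * -(l : ℝ) = -(θ * l) by ring, neg_neg]; ring
  -- the key inequality
  have key : 2 * D * T ≤ ((r : ℝ) - 1) * Z := by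
    rcases eq_or_lt_of_le hr with heq | hgt
    · -- r = 2
      have hθ2 := hθr2 heq.symm
      have hc2 : ∀ x : Fin l → Bool, 2 ≤ c x := by
        intro x
        have hmulx : Real.exp (θ * ∑ u, spin (x u)) * Real.exp (-(θ * ∑ u, spin (x u))) = 1 := by
          rw [← Real.exp_add]; simp
        simp only [hc]
        nlinarith [Real.exp_pos (θ * ∑ u, spin (x u)),
          sq_nonneg (Real.exp (θ * ∑ u, spin (x u)) - 1), hmulx]
      subst heq
      have hT2 : T = (2 : ℝ) ^ l := by
        rw [hTdef]
        norm_num [Finset.card_univ, Fintype.card_fun]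
      have hP : (2 : ℝ) ^ l ≤ Real.exp (θ * l) := by
        have h2l : ((2 : ℝ) ^ l) = Real.exp (l * Real.log 2) := by
          rw [← Real.rpow_natCast (2 : ℝ) l, Real.rpow_def_of_pos two_pos]
          congr 1; ring
        rw [h2l, Real.exp_le_exp]
        calc (l : ℝ) * Real.log 2 ≤ (l : ℝ) * θ := by
              exact mul_le_mul_of_nonneg_left hθ2 (by positivity)
          _ = θ * l := by ring
      have hP2 : (2 : ℝ) ≤ (2 : ℝ) ^ l := by
        calc (2 : ℝ) = 2 ^ 1 := by norm_num
          _ ≤ 2 ^ l := by exact pow_le_pow_right₀ (by norm_num) hl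
      have hsub : ∑ x ∈ ({(fun _ => true), (fun _ => false)} : Finset (Fin l → Bool)),
          (c x ^ 2 - 4) ≤ ∑ x : Fin l → Bool, (c x ^ 2 - 4) := by
        refine Finset.sum_le_sum_of_subset_of_nonneg (Finset.subset_univ _) ?_
        intro x _ _
        nlinarith [hc2 x]
      have hne : (fun _ => true : Fin l → Bool) ≠ (fun _ => false) := by
        intro h
        have := congrFun h ⟨0, hl⟩
        simp at this
      rw [Finset.sum_pair hne, hcx1, hcx0] at hsub
      have hsumeq : ∑ x : Fin l → Bool, (c x ^ 2 - 4) = Z - 4 * (2 : ℝ) ^ l := by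
        rw [Finset.sum_sub_distrib, hZdef, Finset.sum_const, Finset.card_univ]
        simp [Fintype.card_fun]
        ring
      rw [hsumeq] at hsub
      have hmul : Real.exp (θ * l) * Real.exp (-(θ * l)) = 1 := by
        rw [← Real.exp_add]; simp
      have hie : 0 < Real.exp (-(θ * l)) := Real.exp_pos _
      have hEP : Real.exp (θ * l) * (2 : ℝ) ^ l ≤ Real.exp (θ * l) * Real.exp (θ * l) :=
        mul_le_mul_of_nonneg_left hP hEpos.le
      rw [hT2, hDdef]
      push_cast
      nlinarith [hsub, hmul, hie, hEP, hP2, sq_nonneg (Real.exp (-(θ * l)))]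
    · -- r ≥ 3
      have hr3 : 3 ≤ r := hgt
      have hθr3 := hθr hgt
      have hk := key3 l r hl hr3 θ hθl2 hθr3 c hcpos (fun _ => true) (le_of_eq hcx1.symm)
      rw [hDdef]
      calc 2 * (Real.exp (θ * (l : ℝ)) + (r : ℝ) - 1) * T
          ≤ ((r : ℝ) - 1) * ∑ x : Fin l → Bool, c x ^ r := hk
        _ = ((r : ℝ) - 1) * Z := by rw [hZdef]
  -- conclude
  rw [hNsum, le_div_iff₀ hZpos]
  have h4T : 4 * T ≤ 2 * ((r : ℝ) - 1) / D * Z := by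
    rw [div_mul_eq_mul_div, le_div_iff₀ hDpos]
    have hTnn : 0 ≤ T := Finset.sum_nonneg fun x _ => pow_nonneg (hcpos x).le _
    nlinarith [key, hDpos]
  have expand : (1 - 2 * ((r : ℝ) - 1) / D) * Z = Z - 2 * ((r : ℝ) - 1) / D * Z := by ring
  calc (1 - 2 * ((r : ℝ) - 1) / D) * Z = Z - 2 * ((r : ℝ) - 1) / D * Z := expand
    _ ≤ Z - 4 * T := by linarith
end

section
/- Fix s ≥ 1 and define, for an integer c with 0 ≤ c ≤ s, F(c) as follows: if s is even, F(c) = lim_{θ→∞} of the standardized overlapping-clique partition ratio, which equals 2^c/binomial(s, s/2)² · Σ_{j even, 0≤j≤2c} binomial(c, j/2)·binomial(s−c, (s−j)/2)². Then for even s, F(c) ≤ 2^c·binomial(s−c, s/2 − ⌊c/2⌋)/binomial(s, s/2), and this bound is at most (1 + 1/(s − 2⌊c/2⌋ + 1))^{⌊c/2⌋} and at most √(2s). -/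
/-- The limiting (θ → ∞) standardized overlapping-clique partition ratio for even `s`
and overlap size `c`. -/
noncomputable def cliqueRatioLimit (s c : ℕ) : ℝ :=
  2 ^ c / ((s.choose (s / 2) : ℝ)) ^ 2 *
    ∑ i ∈ Finset.range (c + 1),
      (c.choose i : ℝ) * (if 2 * i ≤ s then (((s - c).choose (s / 2 - i) : ℕ) : ℝ) else 0) ^ 2

/-- The binomial upper bound `2^c C(s-c, s/2 - ⌊c/2⌋)/C(s, s/2)`. -/
noncomputable def cliqueRatioBound (s c : ℕ) : ℝ :=
  2 ^ c * (((s - c).choose (s / 2 - c / 2) : ℕ) : ℝ) / (s.choose (s / 2) : ℝ)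

/- ### Auxiliary lemmas -/

lemma aux_choose_le_two_pow (n k : ℕ) : n.choose k ≤ 2 ^ n := by
  by_cases h : k ≤ n
  · rw [← Nat.sum_range_choose n]
    exact Finset.single_le_sum (f := fun i => n.choose i) (fun _ _ => Nat.zero_le _)
      (Finset.mem_range.2 (Nat.lt_succ_of_le h))
  · rw [Nat.choose_eq_zero_of_lt (by omega)]
    exact Nat.zero_le _

/-- Doubling identity: `C(2t, t) = 2 C(2t-1, t)` for `t ≥ 1`. -/
lemma aux_double_choose (u : ℕ) : (2 * (u + 1)).choose (u + 1) = 2 * (2 * u + 1).choose (u + 1) := by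
  have h1 : 2 * (u + 1) = (2 * u + 1) + 1 := by ring
  rw [h1, Nat.choose_succ_succ', Nat.choose_symm_half]
  ring

/-- Ratio identity: `(u+1) C(2(u+1), u+1) = 2(2u+1) C(2u, u)`. -/
lemma aux_cb_ratio (u : ℕ) :
    (u + 1) * (2 * (u + 1)).choose (u + 1) = 2 * (2 * u + 1) * (2 * u).choose u := by
  have := Nat.succ_mul_centralBinom_succ u
  simpa [Nat.centralBinom] using this

/-- Real version of the ratio identity. -/
lemma aux_cb_ratio_real (u : ℕ) :
    (4 : ℝ) * ((2 * u).choose u) = ((2 * (u + 1)).choose (u + 1)) * (1 + 1 / (2 * ((u:ℝ) + 1) - 1)) := by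
  have h := aux_cb_ratio u
  have h' : ((u:ℝ) + 1) * ((2 * (u + 1)).choose (u + 1)) = 2 * (2 * u + 1) * ((2 * u).choose u) := by
    exact_mod_cast h
  have hne : 2 * ((u:ℝ) + 1) - 1 ≠ 0 := by
    have : (0:ℝ) ≤ u := Nat.cast_nonneg u
    nlinarith
  field_simp
  nlinarith [h']

/-- Key inductive bound: `2^(2k) C(2(t-k), t-k) ≤ C(2t, t) (1 + 1/(2t-2k+1))^k`. -/
lemma aux_lemB (t : ℕ) : ∀ k, k ≤ t →
    (2:ℝ) ^ (2 * k) * (((2 * (t - k)).choose (t - k) : ℕ) : ℝ)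
      ≤ ((2 * t).choose t : ℝ) * (1 + 1 / (2 * (t:ℝ) - 2 * k + 1)) ^ k := by
  intro k
  induction k with
  | zero => intro _; simp
  | succ k IH =>
    intro hk1
    have hkt : k < t := by omega
    set n : ℕ := t - (k + 1) with hn
    have hnk : t - k = n + 1 := by omega
    have key := aux_cb_ratio_real n
    -- casts
    have hcast : ((n:ℝ) + 1) = (t:ℝ) - k := by
      have : ((n + 1 : ℕ) : ℝ) = ((t - k : ℕ) : ℝ) := by rw [← hnk]
      push_cast [Nat.cast_sub hkt.le] at this ⊢
      linarith
    set β : ℝ := 1 + 1 / (2 * ((n:ℝ) + 1) - 1) with hβ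
    have hden : (1:ℝ) ≤ 2 * ((n:ℝ) + 1) - 1 := by
      have : (0:ℝ) ≤ n := Nat.cast_nonneg n
      linarith
    have hβ1 : (1:ℝ) ≤ β := by
      have : 0 < 2 * ((n:ℝ) + 1) - 1 := by linarith
      have := one_div_pos.mpr this
      simp only [hβ]; linarith
    set α : ℝ := 1 + 1 / (2 * (t:ℝ) - 2 * k + 1) with hα
    have hαβ : α ≤ β := by
      have h1 : 2 * ((n:ℝ) + 1) - 1 ≤ 2 * (t:ℝ) - 2 * k + 1 := by rw [hcast]; ring_nf; linarith
      have h2 : (0:ℝ) < 2 * ((n:ℝ) + 1) - 1 := by linarith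
      have := one_div_le_one_div_of_le h2 h1
      simp only [hα, hβ]; linarith
    have hα0 : 0 ≤ α := by
      have h2 : (0:ℝ) < 2 * ((n:ℝ) + 1) - 1 := by linarith
      have h1 : (0:ℝ) < 2 * (t:ℝ) - 2 * k + 1 := by linarith [hαβ, hα]
      have := one_div_pos.mpr h1
      simp only [hα]; linarith
    have IH' := IH (by omega)
    rw [hnk] at IH'
    have hC0 : (0:ℝ) ≤ ((2 * t).choose t : ℝ) := Nat.cast_nonneg _
    -- goal base equals β
    have hbase : 1 + 1 / (2 * (t:ℝ) - 2 * (k + 1 : ℕ) + 1) = β := by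
      simp only [hβ]
      congr 1
      congr 1
      push_cast
      linarith [hcast]
    calc (2:ℝ) ^ (2 * (k + 1)) * (((2 * n).choose n : ℕ) : ℝ)
        = (2:ℝ) ^ (2 * k) * (4 * ((2 * n).choose n : ℝ)) := by ring
      _ = (2:ℝ) ^ (2 * k) * (((2 * (n + 1)).choose (n + 1) : ℝ)) * β := by rw [key]; ring
      _ ≤ (((2 * t).choose t : ℝ) * α ^ k) * β := by
          apply mul_le_mul_of_nonneg_right IH' (by linarith)
      _ ≤ (((2 * t).choose t : ℝ) * β ^ k) * β := by
          have hpow : α ^ k ≤ β ^ k := pow_le_pow_left₀ hα0 hαβ k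
          have h2 : ((2 * t).choose t : ℝ) * α ^ k ≤ ((2 * t).choose t : ℝ) * β ^ k :=
            mul_le_mul_of_nonneg_left hpow hC0
          exact mul_le_mul_of_nonneg_right h2 (by linarith)
      _ = ((2 * t).choose t : ℝ) * β ^ (k + 1) := by ring
      _ = ((2 * t).choose t : ℝ) * (1 + 1 / (2 * (t:ℝ) - 2 * (k + 1 : ℕ) + 1)) ^ (k + 1) := by
          rw [hbase]

/-- Vandermonde bound (ℕ). -/
lemma aux_vdm (s c t : ℕ) (hc : c ≤ s) (ht : s = 2 * t) :
    (∑ i ∈ Finset.range (c + 1),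
      (if 2 * i ≤ s then c.choose i * ((s - c).choose (s / 2 - i)) else 0)) ≤ s.choose (s / 2) := by
  have hs2 : s / 2 = t := by omega
  set f : ℕ → ℕ := fun i => if 2 * i ≤ s then c.choose i * ((s - c).choose (s / 2 - i)) else 0
  have h1 : (∑ i ∈ Finset.range (c + 1), f i) ≤ ∑ i ∈ Finset.range (s + c + 1), f i :=
    Finset.sum_le_sum_of_subset (Finset.range_subset_range.2 (by omega))
  have h2 : (∑ i ∈ Finset.range (t + 1), f i) = ∑ i ∈ Finset.range (s + c + 1), f i := by
    apply Finset.sum_subset (Finset.range_subset_range.2 (by omega))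
    intro i _ hi
    have : ¬ (2 * i ≤ s) := by
      simp only [Finset.mem_range] at hi; omega
    simp [f, this]
  have h3 : (∑ i ∈ Finset.range (t + 1), f i)
      = ∑ i ∈ Finset.range (t + 1), c.choose i * ((s - c).choose (t - i)) := by
    apply Finset.sum_congr rfl
    intro i hi
    have hi' : 2 * i ≤ s := by
      simp only [Finset.mem_range] at hi; omega
    simp [f, hi', hs2]
  have h4 : (∑ i ∈ Finset.range (t + 1), c.choose i * ((s - c).choose (t - i)))
      = s.choose (s / 2) := by
    have := Nat.add_choose_eq c (s - c) t
    rw [Finset.Nat.sum_antidiagonal_eq_sum_range_succ_mk] at this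
    rw [← this]
    congr 1 <;> omega
  calc (∑ i ∈ Finset.range (c + 1), f i)
      ≤ ∑ i ∈ Finset.range (s + c + 1), f i := h1
    _ = ∑ i ∈ Finset.range (t + 1), f i := h2.symm
    _ = ∑ i ∈ Finset.range (t + 1), c.choose i * ((s - c).choose (t - i)) := h3
    _ = s.choose (s / 2) := h4

/-- Maximality of the (near-)central coefficient. -/
lemma aux_max (s c t : ℕ) (hc : c ≤ s) (ht : s = 2 * t) (i : ℕ) :
    (s - c).choose (s / 2 - i) ≤ (s - c).choose (s / 2 - c / 2) := by
  have h := Nat.choose_le_middle (s / 2 - i) (s - c)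
  have heq : (s - c).choose ((s - c) / 2) = (s - c).choose (s / 2 - c / 2) := by
    rcases Nat.even_or_odd c with ⟨u, hu⟩ | ⟨u, hu⟩
    · have : (s - c) / 2 = s / 2 - c / 2 := by omega
      rw [this]
    · have hle : s / 2 - c / 2 ≤ s - c := by omega
      have h2 : (s - c) - (s / 2 - c / 2) = (s - c) / 2 := by omega
      rw [← Nat.choose_symm hle, h2]
  omega

/-- `16^n ≤ 4n C(2n,n)²` for `n ≥ 1`. -/
lemma aux_sixteen : ∀ n, 1 ≤ n → 16 ^ n ≤ 4 * n * (Nat.centralBinom n) ^ 2 := by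
  intro n
  induction n with
  | zero => omega
  | succ n IH =>
    intro _
    by_cases hn : 1 ≤ n
    · have key := Nat.succ_mul_centralBinom_succ n
      have IH' := IH hn
      refine Nat.le_of_mul_le_mul_left ?_ (show 0 < n + 1 by omega)
      calc (n + 1) * 16 ^ (n + 1) = 16 * (n + 1) * 16 ^ n := by ring
        _ ≤ 16 * (n + 1) * (4 * n * (Nat.centralBinom n) ^ 2) := by gcongr
        _ = (4 * (n * (n + 1))) * (16 * (Nat.centralBinom n) ^ 2) := by ring
        _ ≤ ((2 * n + 1) ^ 2) * (16 * (Nat.centralBinom n) ^ 2) := by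
            gcongr
            nlinarith
        _ = 4 * (2 * (2 * n + 1) * Nat.centralBinom n) ^ 2 := by ring
        _ = 4 * ((n + 1) * Nat.centralBinom (n + 1)) ^ 2 := by rw [← key]
        _ = (n + 1) * (4 * (n + 1) * (Nat.centralBinom (n + 1)) ^ 2) := by ring
    · have hn0 : n = 0 := by omega
      subst hn0
      simp [Nat.centralBinom]
  
/-- For even `s` and `0 ≤ c ≤ s`: the limiting ratio is at most the binomial bound, which is
in turn at most `(1 + 1/(s - 2⌊c/2⌋ + 1))^⌊c/2⌋` and at most `√(2s)`. -/
theorem clique_ratio_bounds (s c : ℕ) (hs : 0 < s) (hse : Even s) (hc : c ≤ s) :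
    cliqueRatioLimit s c ≤ cliqueRatioBound s c
    ∧ cliqueRatioBound s c
        ≤ (1 + 1 / ((s : ℝ) - 2 * ((c / 2 : ℕ) : ℝ) + 1)) ^ (c / 2)
    ∧ cliqueRatioBound s c ≤ Real.sqrt (2 * s) := by
  obtain ⟨t, ht'⟩ := hse
  have ht : s = 2 * t := by omega
  have hs2 : s / 2 = t := by omega
  have hCpos : 0 < (s.choose (s / 2) : ℝ) := by
    exact_mod_cast Nat.choose_pos (show s / 2 ≤ s by omega)
  have hM0 : (0:ℝ) ≤ (((s - c).choose (s / 2 - c / 2) : ℕ) : ℝ) := Nat.cast_nonneg _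
  have hCC : s.choose (s / 2) = (2 * t).choose t := by rw [hs2, ht]
  have hsR : (s : ℝ) = 2 * (t : ℝ) := by exact_mod_cast congrArg (Nat.cast (R := ℝ)) ht
  -- Part 1
  have part1 : cliqueRatioLimit s c ≤ cliqueRatioBound s c := by
    unfold cliqueRatioLimit cliqueRatioBound
    have hsum : (∑ i ∈ Finset.range (c + 1), (c.choose i : ℝ) *
        (if 2 * i ≤ s then (((s - c).choose (s / 2 - i) : ℕ) : ℝ) else 0) ^ 2)
        ≤ (((s - c).choose (s / 2 - c / 2) : ℕ) : ℝ) * (s.choose (s / 2) : ℝ) := by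
      have step1 : ∀ i ∈ Finset.range (c + 1), (c.choose i : ℝ) *
          (if 2 * i ≤ s then (((s - c).choose (s / 2 - i) : ℕ) : ℝ) else 0) ^ 2
          ≤ (((s - c).choose (s / 2 - c / 2) : ℕ) : ℝ) *
            (if 2 * i ≤ s then ((c.choose i * (s - c).choose (s / 2 - i) : ℕ) : ℝ) else 0) := by
        intro i _
        by_cases h : 2 * i ≤ s
        · simp only [if_pos h]
          have hle : (((s - c).choose (s / 2 - i) : ℕ) : ℝ)
              ≤ (((s - c).choose (s / 2 - c / 2) : ℕ) : ℝ) := by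
            exact_mod_cast aux_max s c t hc ht i
          have h0 : (0:ℝ) ≤ (((s - c).choose (s / 2 - i) : ℕ) : ℝ) := Nat.cast_nonneg _
          have h1 : (0:ℝ) ≤ (c.choose i : ℝ) := Nat.cast_nonneg _
          push_cast
          nlinarith [mul_le_mul_of_nonneg_left (mul_le_mul_of_nonneg_right hle h0) h1]
        · simp [if_neg h]
      have hcast : (∑ i ∈ Finset.range (c + 1),
          (if 2 * i ≤ s then ((c.choose i * (s - c).choose (s / 2 - i) : ℕ) : ℝ) else 0))
          = ((∑ i ∈ Finset.range (c + 1),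
            (if 2 * i ≤ s then c.choose i * ((s - c).choose (s / 2 - i)) else 0) : ℕ) : ℝ) := by
        push_cast
        rfl
      calc (∑ i ∈ Finset.range (c + 1), (c.choose i : ℝ) *
            (if 2 * i ≤ s then (((s - c).choose (s / 2 - i) : ℕ) : ℝ) else 0) ^ 2)
          ≤ ∑ i ∈ Finset.range (c + 1), (((s - c).choose (s / 2 - c / 2) : ℕ) : ℝ) *
            (if 2 * i ≤ s then ((c.choose i * (s - c).choose (s / 2 - i) : ℕ) : ℝ) else 0) :=
            Finset.sum_le_sum step1
        _ = (((s - c).choose (s / 2 - c / 2) : ℕ) : ℝ) * ∑ i ∈ Finset.range (c + 1),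
            (if 2 * i ≤ s then ((c.choose i * (s - c).choose (s / 2 - i) : ℕ) : ℝ) else 0) := by
            rw [Finset.mul_sum]
        _ ≤ (((s - c).choose (s / 2 - c / 2) : ℕ) : ℝ) * (s.choose (s / 2) : ℝ) := by
            apply mul_le_mul_of_nonneg_left _ hM0
            rw [hcast]
            exact_mod_cast aux_vdm s c t hc ht
    have h2 : (0:ℝ) ≤ 2 ^ c / ((s.choose (s / 2) : ℝ)) ^ 2 := by positivity
    calc 2 ^ c / ((s.choose (s / 2) : ℝ)) ^ 2 * (∑ i ∈ Finset.range (c + 1), (c.choose i : ℝ) *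
          (if 2 * i ≤ s then (((s - c).choose (s / 2 - i) : ℕ) : ℝ) else 0) ^ 2)
        ≤ 2 ^ c / ((s.choose (s / 2) : ℝ)) ^ 2 *
          ((((s - c).choose (s / 2 - c / 2) : ℕ) : ℝ) * (s.choose (s / 2) : ℝ)) :=
          mul_le_mul_of_nonneg_left hsum h2
      _ = 2 ^ c * (((s - c).choose (s / 2 - c / 2) : ℕ) : ℝ) / (s.choose (s / 2) : ℝ) := by
          field_simp
  -- Key bound for part 2
  have hkey : (2:ℝ) ^ c * (((s - c).choose (s / 2 - c / 2) : ℕ) : ℝ)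
      ≤ (s.choose (s / 2) : ℝ) * (1 + 1 / (2 * (t:ℝ) - 2 * ((c / 2 : ℕ) : ℝ) + 1)) ^ (c / 2) := by
    have hB := aux_lemB t (c / 2) (by omega)
    rw [hCC]
    rcases Nat.even_or_odd c with ⟨u, hu⟩ | ⟨u, hu⟩
    · have e1 : s - c = 2 * (t - c / 2) := by omega
      have e2 : s / 2 - c / 2 = t - c / 2 := by omega
      have e3 : c = 2 * (c / 2) := by omega
      rw [e1, e2]
      calc (2:ℝ) ^ c * (((2 * (t - c / 2)).choose (t - c / 2) : ℕ) : ℝ)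
          = (2:ℝ) ^ (2 * (c / 2)) * (((2 * (t - c / 2)).choose (t - c / 2) : ℕ) : ℝ) := by
            rw [← e3]
        _ ≤ _ := hB
    · set v := t - c / 2 - 1 with hv0
      have hv : t - c / 2 = v + 1 := by omega
      have e1 : s - c = 2 * v + 1 := by omega
      have e2 : s / 2 - c / 2 = v + 1 := by omega
      have hdc : (((2 * (v + 1)).choose (v + 1) : ℕ) : ℝ)
          = 2 * (((2 * v + 1).choose (v + 1) : ℕ) : ℝ) := by
        exact_mod_cast aux_double_choose v
      have e3 : c = 2 * (c / 2) + 1 := by omega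
      calc (2:ℝ) ^ c * (((s - c).choose (s / 2 - c / 2) : ℕ) : ℝ)
          = (2:ℝ) ^ (2 * (c / 2)) * (2 * (((2 * v + 1).choose (v + 1) : ℕ) : ℝ)) := by
            rw [e1, e2]
            nth_rewrite 1 [e3]
            ring
        _ = (2:ℝ) ^ (2 * (c / 2)) * (((2 * (v + 1)).choose (v + 1) : ℕ) : ℝ) := by rw [hdc]
        _ = (2:ℝ) ^ (2 * (c / 2)) * (((2 * (t - c / 2)).choose (t - c / 2) : ℕ) : ℝ) := by
            rw [hv]
        _ ≤ _ := hB
  have part2 : cliqueRatioBound s c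
      ≤ (1 + 1 / ((s : ℝ) - 2 * ((c / 2 : ℕ) : ℝ) + 1)) ^ (c / 2) := by
    unfold cliqueRatioBound
    rw [div_le_iff₀ hCpos, hsR]
    linarith [hkey]
  have part3 : cliqueRatioBound s c ≤ Real.sqrt (2 * s) := by
    have h1 : cliqueRatioBound s c ≤ 2 ^ s / (s.choose (s / 2) : ℝ) := by
      unfold cliqueRatioBound
      gcongr
      calc (2:ℝ) ^ c * (((s - c).choose (s / 2 - c / 2) : ℕ) : ℝ)
          ≤ (2:ℝ) ^ c * (2:ℝ) ^ (s - c) := by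
            gcongr
            exact_mod_cast aux_choose_le_two_pow (s - c) (s / 2 - c / 2)
        _ = (2:ℝ) ^ s := by rw [← pow_add]; congr 1; omega
    have h2 : (2:ℝ) ^ s / (s.choose (s / 2) : ℝ) ≤ Real.sqrt (2 * s) := by
      rw [div_le_iff₀ hCpos]
      have hnat : (2 ^ s) ^ 2 ≤ 2 * s * (s.choose (s / 2)) ^ 2 := by
        have h16 := aux_sixteen t (by omega)
        have hcb : s.choose (s / 2) = Nat.centralBinom t := by rw [hCC]; rfl
        rw [hcb]
        calc (2 ^ s) ^ 2 = 16 ^ t := by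
              rw [ht, ← pow_mul, show 2 * t * 2 = 4 * t by ring, pow_mul]
              norm_num
          _ ≤ 4 * t * (Nat.centralBinom t) ^ 2 := h16
          _ = 2 * s * (Nat.centralBinom t) ^ 2 := by rw [ht]; ring
      have hreal : ((2:ℝ) ^ s) ^ 2 ≤ 2 * (s:ℝ) * ((s.choose (s / 2) : ℝ)) ^ 2 := by
        exact_mod_cast hnat
      calc (2:ℝ) ^ s = Real.sqrt (((2:ℝ) ^ s) ^ 2) := (Real.sqrt_sq (by positivity)).symm
        _ ≤ Real.sqrt (2 * (s:ℝ) * ((s.choose (s / 2) : ℝ)) ^ 2) := Real.sqrt_le_sqrt hreal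
        _ = Real.sqrt (2 * (s:ℝ)) * (s.choose (s / 2) : ℝ) := by
            rw [Real.sqrt_mul (by positivity), Real.sqrt_sq hCpos.le]
    exact h1.trans h2
  exact ⟨part1, part2, part3⟩
end
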